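/- arXiv:2109.09012 — 8 statements merged into one kernel-verified Lean document; each statement's English description precedes it below -/
import Mathlib

section
/- Let H be a complex Hilbert space, Ω a nonempty set, and k : Ω → H a family of unit vectors. For bounded operators A, B on H with B invertible, if ‖(A−B) k(λ)‖ ≤ r for all λ ∈ Ω (for some r > 0), then sup over λ of ‖A k(λ)‖ ≤ ‖B⁻¹‖ · (sup over λ of |⟨B* A k(λ), k(λ)⟩| + r²/2). -/
open ContinuousLinearMap in
theorem stmt_0 {H : Type*} [NormedAddCommGroup H] [InnerProductSpace ℂ H] [CompleteSpace H]
    {Ω : Type*} [Nonempty Ω] (k : Ω → H) (hk : ∀ l, ‖k l‖ = 1)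
    (A B Binv : H →L[ℂ] H)
    (hB1 : B.comp Binv = ContinuousLinearMap.id ℂ H)
    (hB2 : Binv.comp B = ContinuousLinearMap.id ℂ H)
    (r : ℝ) (hr : 0 < r) (h : ∀ l, ‖(A - B) (k l)‖ ≤ r) :
    (⨆ l, ‖A (k l)‖) ≤
      ‖Binv‖ * ((⨆ l, ‖(inner ℂ ((adjoint B) (A (k l))) (k l) : ℂ)‖) + r ^ 2 / 2) := by
  have hbdd : BddAbove (Set.range fun l => ‖(inner ℂ ((adjoint B) (A (k l))) (k l) : ℂ)‖) := by
    refine ⟨‖adjoint B‖ * ‖A‖, ?_⟩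
    rintro x ⟨l, rfl⟩
    calc ‖(inner ℂ ((adjoint B) (A (k l))) (k l) : ℂ)‖
        ≤ ‖(adjoint B) (A (k l))‖ * ‖k l‖ := norm_inner_le_norm _ _
      _ = ‖(adjoint B) (A (k l))‖ := by rw [hk l, mul_one]
      _ ≤ ‖adjoint B‖ * ‖A (k l)‖ := (adjoint B).le_opNorm _
      _ ≤ ‖adjoint B‖ * (‖A‖ * ‖k l‖) :=
          mul_le_mul_of_nonneg_left (A.le_opNorm _) (norm_nonneg _)
      _ = ‖adjoint B‖ * ‖A‖ := by rw [hk l, mul_one]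
  refine ciSup_le fun l => ?_
  -- 1 ≤ ‖Binv‖ * ‖B (k l)‖
  have hBk : Binv (B (k l)) = k l := by
    have := congrArg (fun T : H →L[ℂ] H => T (k l)) hB2
    simpa using this
  have h1 : (1 : ℝ) ≤ ‖Binv‖ * ‖B (k l)‖ := by
    have := Binv.le_opNorm (B (k l))
    rw [hBk, hk l] at this
    exact this
  -- key inequality: ‖A k‖ * ‖B k‖ ≤ ‖⟨Ak, Bk⟩‖ + r²/2
  have hadj : (inner ℂ ((adjoint B) (A (k l))) (k l) : ℂ)
      = inner ℂ (A (k l)) (B (k l)) := adjoint_inner_left B _ _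
  have hre : Complex.re (inner ℂ (A (k l)) (B (k l)) : ℂ)
      ≤ ‖(inner ℂ (A (k l)) (B (k l)) : ℂ)‖ := Complex.re_le_norm _
  have hsq : ‖A (k l) - B (k l)‖ ^ 2
      = ‖A (k l)‖ ^ 2 - 2 * Complex.re (inner ℂ (A (k l)) (B (k l)) : ℂ) + ‖B (k l)‖ ^ 2 :=
    @norm_sub_sq ℂ _ _ _ _ _ _
  have hr2 : ‖A (k l) - B (k l)‖ ^ 2 ≤ r ^ 2 := by
    have := h l
    rw [ContinuousLinearMap.sub_apply] at this
    exact pow_le_pow_left₀ (norm_nonneg _) this 2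
  have key : ‖A (k l)‖ * ‖B (k l)‖
      ≤ ‖(inner ℂ ((adjoint B) (A (k l))) (k l) : ℂ)‖ + r ^ 2 / 2 := by
    rw [hadj]
    nlinarith [sq_nonneg (‖A (k l)‖ - ‖B (k l)‖), hre, hsq, hr2]
  have hsup : ‖(inner ℂ ((adjoint B) (A (k l))) (k l) : ℂ)‖
      ≤ ⨆ m, ‖(inner ℂ ((adjoint B) (A (k m))) (k m) : ℂ)‖ := le_ciSup hbdd l
  calc ‖A (k l)‖ = ‖A (k l)‖ * 1 := (mul_one _).symm
    _ ≤ ‖A (k l)‖ * (‖Binv‖ * ‖B (k l)‖) :=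
        mul_le_mul_of_nonneg_left h1 (norm_nonneg _)
    _ = ‖Binv‖ * (‖A (k l)‖ * ‖B (k l)‖) := by ring
    _ ≤ ‖Binv‖ * (‖(inner ℂ ((adjoint B) (A (k l))) (k l) : ℂ)‖ + r ^ 2 / 2) :=
        mul_le_mul_of_nonneg_left key (norm_nonneg _)
    _ ≤ ‖Binv‖ * ((⨆ m, ‖(inner ℂ ((adjoint B) (A (k m))) (k m) : ℂ)‖) + r ^ 2 / 2) := by
        apply mul_le_mul_of_nonneg_left _ (norm_nonneg _)
        linarith
end

section
/- Let H be a complex Hilbert space, Ω nonempty, k : Ω → H unit vectors, A a bounded operator on H, μ a nonzero complex number, r > 0. If ‖(A − μ·I) k(λ)‖ ≤ r for all λ ∈ Ω, then 0 ≤ (sup_λ ‖A k(λ)‖) − (sup_λ |⟨A k(λ), k(λ)⟩|) ≤ r² / (2|μ|). -/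
theorem stmt_1 {H : Type*} [NormedAddCommGroup H] [InnerProductSpace ℂ H] [CompleteSpace H]
    {Ω : Type*} [Nonempty Ω] (k : Ω → H) (hk : ∀ l, ‖k l‖ = 1)
    (A : H →L[ℂ] H) (μ : ℂ) (hμ : μ ≠ 0) (r : ℝ) (hr : 0 < r)
    (h : ∀ l, ‖(A - μ • ContinuousLinearMap.id ℂ H) (k l)‖ ≤ r) :
    0 ≤ (⨆ l, ‖A (k l)‖) - (⨆ l, ‖(inner ℂ (A (k l)) (k l) : ℂ)‖) ∧
      (⨆ l, ‖A (k l)‖) - (⨆ l, ‖(inner ℂ (A (k l)) (k l) : ℂ)‖) ≤ r ^ 2 / (2 * ‖μ‖) := by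
  have hμn : (0:ℝ) < ‖μ‖ := norm_pos_iff.mpr hμ
  have hge : ∀ l, ‖(inner ℂ (A (k l)) (k l) : ℂ)‖ ≤ ‖A (k l)‖ := by
    intro l
    calc ‖(inner ℂ (A (k l)) (k l) : ℂ)‖ ≤ ‖A (k l)‖ * ‖k l‖ := norm_inner_le_norm _ _
      _ = ‖A (k l)‖ := by rw [hk l, mul_one]
  have hbf : BddAbove (Set.range fun l => ‖A (k l)‖) := by
    refine ⟨‖A‖, ?_⟩
    rintro _ ⟨l, rfl⟩
    simpa [hk l] using A.le_opNorm (k l)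
  have hbg : BddAbove (Set.range fun l => ‖(inner ℂ (A (k l)) (k l) : ℂ)‖) := by
    refine ⟨‖A‖, ?_⟩
    rintro _ ⟨l, rfl⟩
    refine le_trans (hge l) ?_
    simpa [hk l] using A.le_opNorm (k l)
  -- key pointwise bound
  have key : ∀ l, ‖A (k l)‖ ≤ ‖(inner ℂ (A (k l)) (k l) : ℂ)‖ + r ^ 2 / (2 * ‖μ‖) := by
    intro l
    set x := k l with hxdef
    set c : ℂ := inner ℂ (A x) x with hc
    have hx : ‖x‖ = 1 := hk l
    have he : A x = ((A - μ • ContinuousLinearMap.id ℂ H) x) + μ • x := by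
      simp
    have hex : (inner ℂ ((A - μ • ContinuousLinearMap.id ℂ H) x) x : ℂ) = c - (starRingEnd ℂ) μ := by
      simp [inner_sub_left, inner_smul_left, ← hc,
        inner_self_eq_norm_sq_to_K (𝕜 := ℂ) x, hx]
    have hr2 : ‖A x‖ ^ 2 ≤ r ^ 2 + 2 * ‖μ‖ * ‖c‖ - ‖μ‖ ^ 2 := by
      have hsq : ‖A x‖ ^ 2 = ‖(A - μ • ContinuousLinearMap.id ℂ H) x‖ ^ 2
          + 2 * Complex.re (μ * (c - (starRingEnd ℂ) μ)) + ‖μ‖ ^ 2 := by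
        rw [he, @norm_add_sq ℂ, inner_smul_right, hex, norm_smul, hx, mul_one]
        norm_num
      have hre : Complex.re (μ * (c - (starRingEnd ℂ) μ)) ≤ ‖μ‖ * ‖c‖ - ‖μ‖ ^ 2 := by
        have : μ * (c - (starRingEnd ℂ) μ) = μ * c - μ * (starRingEnd ℂ) μ := by ring
        rw [this, Complex.sub_re]
        have h1 : Complex.re (μ * c) ≤ ‖μ * c‖ := Complex.re_le_norm _
        have h2 : Complex.re (μ * (starRingEnd ℂ) μ) = ‖μ‖ ^ 2 := by
          rw [Complex.mul_conj, Complex.ofReal_re, ← Complex.sq_norm]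
        rw [h2]
        have : ‖μ * c‖ = ‖μ‖ * ‖c‖ := norm_mul _ _
        linarith [h1, this.le]
      have hen : ‖(A - μ • ContinuousLinearMap.id ℂ H) x‖ ^ 2 ≤ r ^ 2 := by
        have := h l
        nlinarith [norm_nonneg ((A - μ • ContinuousLinearMap.id ℂ H) x)]
      nlinarith
    have hb : (0:ℝ) ≤ ‖c‖ + r ^ 2 / (2 * ‖μ‖) := by positivity
    refine le_of_pow_le_pow_left₀ two_ne_zero hb ?_
    have hq : (0:ℝ) ≤ (‖c‖ - ‖μ‖ + r ^ 2 / (2 * ‖μ‖)) ^ 2 := sq_nonneg _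
    have hdiv : r ^ 2 / (2 * ‖μ‖) * (2 * ‖μ‖) = r ^ 2 :=
      div_mul_cancel₀ _ (by positivity)
    nlinarith [hr2, hq, hμn, norm_nonneg c]
  constructor
  · have : (⨆ l, ‖(inner ℂ (A (k l)) (k l) : ℂ)‖) ≤ ⨆ l, ‖A (k l)‖ := ciSup_mono hbf hge
    linarith
  · have h1 : (⨆ l, ‖A (k l)‖) ≤ (⨆ l, ‖(inner ℂ (A (k l)) (k l) : ℂ)‖) + r ^ 2 / (2 * ‖μ‖) := by
      apply ciSup_le
      intro l
      refine le_trans (key l) ?_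
      gcongr
      exact le_ciSup hbg l
    linarith
end

section
/- Let H be a complex Hilbert space, Ω nonempty, k : Ω → H unit vectors, and A, B bounded operators on H. If for some C > 0 one has ⟨B*B k(λ), k(λ)⟩ ≥ C for all λ ∈ Ω, and ‖(A−B) k(λ)‖ ≤ r for all λ (r > 0), then sup_λ ‖A k(λ)‖ ≤ (1/√C) · (sup_λ |⟨B* A k(λ), k(λ)⟩| + r²/2). -/
open ContinuousLinearMap in
theorem stmt_2 {H : Type*} [NormedAddCommGroup H] [InnerProductSpace ℂ H] [CompleteSpace H]
    {Ω : Type*} [Nonempty Ω] (k : Ω → H) (hk : ∀ l, ‖k l‖ = 1)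
    (A B : H →L[ℂ] H) (C : ℝ) (hC : 0 < C)
    (hBC : ∀ l, C ≤ (inner ℂ ((adjoint B) (B (k l))) (k l) : ℂ).re)
    (r : ℝ) (hr : 0 < r) (h : ∀ l, ‖(A - B) (k l)‖ ≤ r) :
    (⨆ l, ‖A (k l)‖) ≤
      (1 / Real.sqrt C) * ((⨆ l, ‖(inner ℂ ((adjoint B) (A (k l))) (k l) : ℂ)‖) + r ^ 2 / 2) := by
  have hs : 0 < Real.sqrt C := Real.sqrt_pos.mpr hC
  have hbdd : BddAbove (Set.range fun l => ‖(inner ℂ ((adjoint B) (A (k l))) (k l) : ℂ)‖) := by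
    refine ⟨‖adjoint B‖ * ‖A‖, ?_⟩
    rintro _ ⟨l, rfl⟩
    calc ‖(inner ℂ ((adjoint B) (A (k l))) (k l) : ℂ)‖
        ≤ ‖(adjoint B) (A (k l))‖ * ‖k l‖ := norm_inner_le_norm _ _
      _ ≤ (‖adjoint B‖ * ‖A (k l)‖) * ‖k l‖ := by
          have := (adjoint B).le_opNorm (A (k l))
          have : ‖(adjoint B) (A (k l))‖ ≤ ‖adjoint B‖ * ‖A (k l)‖ := this
          nlinarith [norm_nonneg (k l)]
      _ ≤ ‖adjoint B‖ * ‖A‖ := by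
          rw [hk l, mul_one]
          have := A.le_opNorm (k l)
          rw [hk l, mul_one] at this
          exact mul_le_mul_of_nonneg_left this (norm_nonneg _)
  refine ciSup_le fun l => ?_
  have hB : Real.sqrt C ≤ ‖B (k l)‖ := by
    have h1 := hBC l
    rw [adjoint_inner_left] at h1
    have h2 : (inner ℂ (B (k l)) (B (k l)) : ℂ).re = ‖B (k l)‖ ^ 2 := by
      rw [← @inner_self_eq_norm_sq ℂ]
      rfl
    have h3 : C ≤ ‖B (k l)‖ ^ 2 := h2 ▸ h1
    calc Real.sqrt C ≤ Real.sqrt (‖B (k l)‖ ^ 2) := Real.sqrt_le_sqrt h3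
      _ = ‖B (k l)‖ := Real.sqrt_sq (norm_nonneg _)
  have key : ‖A (k l)‖ * ‖B (k l)‖ ≤
      ‖(inner ℂ ((adjoint B) (A (k l))) (k l) : ℂ)‖ + r ^ 2 / 2 := by
    rw [adjoint_inner_left]
    have hsub := @norm_sub_sq ℂ _ _ _ _ (A (k l)) (B (k l))
    have hre : RCLike.re (inner ℂ (A (k l)) (B (k l)) : ℂ) ≤ ‖(inner ℂ (A (k l)) (B (k l)) : ℂ)‖ :=
      RCLike.re_le_norm _
    have hr2 : ‖A (k l) - B (k l)‖ ≤ r := by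
      have := h l
      simpa using this
    have hr3 : ‖A (k l) - B (k l)‖ ^ 2 ≤ r ^ 2 :=
      pow_le_pow_left₀ (norm_nonneg _) hr2 2
    nlinarith [sq_nonneg (‖A (k l)‖ - ‖B (k l)‖), norm_nonneg (A (k l) - B (k l))]
  have hle : ‖(inner ℂ ((adjoint B) (A (k l))) (k l) : ℂ)‖ ≤
      ⨆ l, ‖(inner ℂ ((adjoint B) (A (k l))) (k l) : ℂ)‖ := le_ciSup hbdd l
  rw [one_div, inv_mul_eq_div, le_div_iff₀ hs]
  nlinarith [norm_nonneg (A (k l))]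
end

section
/- Let H be a complex Hilbert space, Ω nonempty, k : Ω → H unit vectors, A, B bounded operators with B invertible, r > 0, and suppose ‖(A−B) k(λ)‖ ≤ r for all λ ∈ Ω. Then (sup_λ ‖A k(λ)‖) · ‖B‖ ≤ sup_λ |⟨B* A k(λ), k(λ)⟩| + (1/2)(r² + ‖B‖² − ‖B⁻¹‖⁻²). -/
open ContinuousLinearMap in
theorem stmt_3 {H : Type*} [NormedAddCommGroup H] [InnerProductSpace ℂ H] [CompleteSpace H]
    {Ω : Type*} [Nonempty Ω] (k : Ω → H) (hk : ∀ l, ‖k l‖ = 1)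
    (A B Binv : H →L[ℂ] H)
    (hB1 : B.comp Binv = ContinuousLinearMap.id ℂ H)
    (hB2 : Binv.comp B = ContinuousLinearMap.id ℂ H)
    (r : ℝ) (hr : 0 < r) (h : ∀ l, ‖(A - B) (k l)‖ ≤ r) :
    (⨆ l, ‖A (k l)‖) * ‖B‖ ≤
      (⨆ l, ‖(inner ℂ ((adjoint B) (A (k l))) (k l) : ℂ)‖) +
        (1 / 2) * (r ^ 2 + ‖B‖ ^ 2 - (‖Binv‖⁻¹) ^ 2) := by
  obtain ⟨l0⟩ := ‹Nonempty Ω›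
  have hBinv_pos : 0 < ‖Binv‖ := by
    have hne : Binv ≠ 0 := by
      intro hzero
      have h3 := congrArg (fun T => T (k l0)) hB2
      simp [hzero] at h3
      have h4 := hk l0
      rw [← h3] at h4
      simp at h4
    exact norm_pos_iff.mpr hne
  have key : ∀ l, ‖A (k l)‖ * ‖B‖ ≤ ‖(inner ℂ ((adjoint B) (A (k l))) (k l) : ℂ)‖ +
      (1 / 2) * (r ^ 2 + ‖B‖ ^ 2 - (‖Binv‖⁻¹) ^ 2) := by
    intro l
    have hsub : ‖A (k l) - B (k l)‖ ≤ r := by simpa using h l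
    have h1 : ‖A (k l) - B (k l)‖ ^ 2 ≤ r ^ 2 := by
      apply sq_le_sq' (by linarith [norm_nonneg (A (k l) - B (k l))]) hsub
    have expand : ‖A (k l) - B (k l)‖ ^ 2 =
        ‖A (k l)‖ ^ 2 - 2 * RCLike.re (inner ℂ (A (k l)) (B (k l)) : ℂ) + ‖B (k l)‖ ^ 2 :=
      @norm_sub_sq ℂ _ _ _ _ _ _
    have hinner : (inner ℂ ((adjoint B) (A (k l))) (k l) : ℂ) = inner ℂ (A (k l)) (B (k l)) :=
      ContinuousLinearMap.adjoint_inner_left B (k l) (A (k l))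
    have hre : RCLike.re (inner ℂ (A (k l)) (B (k l)) : ℂ) ≤
        ‖(inner ℂ ((adjoint B) (A (k l))) (k l) : ℂ)‖ := by
      rw [hinner]; exact RCLike.re_le_norm _
    have hBk : ‖Binv‖⁻¹ ≤ ‖B (k l)‖ := by
      have h2 : ‖Binv (B (k l))‖ ≤ ‖Binv‖ * ‖B (k l)‖ := Binv.le_opNorm _
      have h3 : Binv (B (k l)) = k l := by
        have := congrArg (fun T => T (k l)) hB2
        simpa using this
      rw [h3, hk l] at h2
      rw [inv_le_iff_one_le_mul₀ hBinv_pos]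
      linarith
    have hBk2 : (‖Binv‖⁻¹) ^ 2 ≤ ‖B (k l)‖ ^ 2 := by
      apply sq_le_sq' _ hBk
      have : (0:ℝ) < ‖Binv‖⁻¹ := by positivity
      linarith [norm_nonneg (B (k l))]
    have amgm : 2 * ‖A (k l)‖ * ‖B‖ ≤ ‖A (k l)‖ ^ 2 + ‖B‖ ^ 2 := two_mul_le_add_sq _ _
    nlinarith [norm_nonneg (A (k l) - B (k l))]
  have bddA : BddAbove (Set.range fun l => ‖A (k l)‖) := by
    refine ⟨‖A‖, ?_⟩
    rintro x ⟨l, rfl⟩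
    simpa [hk l] using A.le_opNorm (k l)
  have bddI : BddAbove (Set.range fun l => ‖(inner ℂ ((adjoint B) (A (k l))) (k l) : ℂ)‖) := by
    refine ⟨‖adjoint B‖ * ‖A‖, ?_⟩
    rintro x ⟨l, rfl⟩
    calc ‖(inner ℂ ((adjoint B) (A (k l))) (k l) : ℂ)‖
        ≤ ‖(adjoint B) (A (k l))‖ * ‖k l‖ := norm_inner_le_norm _ _
      _ ≤ ‖adjoint B‖ * ‖A (k l)‖ * 1 := by
          rw [hk l]; gcongr; exact (adjoint B).le_opNorm _
      _ ≤ ‖adjoint B‖ * ‖A‖ := by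
          rw [mul_one]
          exact mul_le_mul_of_nonneg_left (by simpa [hk l] using A.le_opNorm (k l))
            (norm_nonneg _)
  rw [Real.iSup_mul_of_nonneg (norm_nonneg B)]
  apply ciSup_le
  intro l
  calc ‖A (k l)‖ * ‖B‖ ≤ ‖(inner ℂ ((adjoint B) (A (k l))) (k l) : ℂ)‖ +
      (1 / 2) * (r ^ 2 + ‖B‖ ^ 2 - (‖Binv‖⁻¹) ^ 2) := key l
    _ ≤ _ := by gcongr; exact le_ciSup bddI l
end

section
/- Let H be a complex Hilbert space, Ω nonempty, k : Ω → H unit vectors, A, B bounded operators with B invertible, and r > 0 with r < ‖B‖. If ‖(A−B) k(λ)‖ ≤ r for all λ ∈ Ω, then sup_λ ‖A k(λ)‖ ≤ (1/√(‖B‖² − r²)) · ( sup_λ |⟨B* A k(λ), k(λ)⟩| + (1/2)(‖B‖² − ‖B⁻¹‖⁻²) ). -/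
open ContinuousLinearMap in
theorem stmt_4 {H : Type*} [NormedAddCommGroup H] [InnerProductSpace ℂ H] [CompleteSpace H]
    {Ω : Type*} [Nonempty Ω] (k : Ω → H) (hk : ∀ l, ‖k l‖ = 1)
    (A B Binv : H →L[ℂ] H)
    (hB1 : B.comp Binv = ContinuousLinearMap.id ℂ H)
    (hB2 : Binv.comp B = ContinuousLinearMap.id ℂ H)
    (r : ℝ) (hr : 0 < r) (hrB : r < ‖B‖)
    (h : ∀ l, ‖(A - B) (k l)‖ ≤ r) :
    (⨆ l, ‖A (k l)‖) ≤
      (1 / Real.sqrt (‖B‖ ^ 2 - r ^ 2)) *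
        ((⨆ l, ‖(inner ℂ ((adjoint B) (A (k l))) (k l) : ℂ)‖) +
          (1 / 2) * (‖B‖ ^ 2 - (‖Binv‖⁻¹) ^ 2)) := by
  set s := Real.sqrt (‖B‖ ^ 2 - r ^ 2) with hs_def
  have hBr : (0:ℝ) < ‖B‖ ^ 2 - r ^ 2 := by nlinarith
  have hs : 0 < s := Real.sqrt_pos.mpr hBr
  have hs2 : s ^ 2 = ‖B‖ ^ 2 - r ^ 2 := Real.sq_sqrt hBr.le
  have hkid : ∀ l, Binv (B (k l)) = k l := by
    intro l
    have := congrArg (fun T => T (k l)) hB2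
    simpa using this
  have hBinv_pos : 0 < ‖Binv‖ := by
    rw [norm_pos_iff]
    intro h0
    have := hkid (Classical.arbitrary Ω)
    rw [h0] at this
    have h1 := hk (Classical.arbitrary Ω)
    simp at this
    rw [← this] at h1
    simp at h1
  have hm : ∀ l, ‖Binv‖⁻¹ ≤ ‖B (k l)‖ := by
    intro l
    have h1 : ‖k l‖ ≤ ‖Binv‖ * ‖B (k l)‖ := by
      conv_lhs => rw [← hkid l]
      exact Binv.le_opNorm _
    rw [hk l] at h1
    rw [inv_eq_one_div, div_le_iff₀ hBinv_pos]
    linarith [mul_comm ‖Binv‖ ‖B (k l)‖]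
  have hbdd : BddAbove (Set.range fun l => ‖(inner ℂ ((adjoint B) (A (k l))) (k l) : ℂ)‖) := by
    refine ⟨‖adjoint B‖ * ‖A‖, ?_⟩
    rintro x ⟨l, rfl⟩
    calc ‖(inner ℂ ((adjoint B) (A (k l))) (k l) : ℂ)‖
        ≤ ‖(adjoint B) (A (k l))‖ * ‖k l‖ := norm_inner_le_norm _ _
      _ ≤ ‖adjoint B‖ * ‖A (k l)‖ * 1 := by
          rw [hk l]; gcongr; exact (adjoint B).le_opNorm _
      _ ≤ ‖adjoint B‖ * (‖A‖ * ‖k l‖) * 1 := by gcongr; exact A.le_opNorm _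
      _ = ‖adjoint B‖ * ‖A‖ := by rw [hk l]; ring
  refine ciSup_le fun l => ?_
  have hinner : (inner ℂ ((adjoint B) (A (k l))) (k l) : ℂ) = inner ℂ (A (k l)) (B (k l)) :=
    ContinuousLinearMap.adjoint_inner_left B _ _
  set u := A (k l)
  set v := B (k l)
  set t := ‖(inner ℂ ((adjoint B) u) (k l) : ℂ)‖ with ht_def
  have htS : t ≤ ⨆ l, ‖(inner ℂ ((adjoint B) (A (k l))) (k l) : ℂ)‖ := le_ciSup hbdd l
  have ht : ‖(inner ℂ u v : ℂ)‖ = t := by rw [ht_def, hinner]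
  have hre : ‖u - v‖ ^ 2 = ‖u‖ ^ 2 - 2 * RCLike.re (inner ℂ u v : ℂ) + ‖v‖ ^ 2 := by
    exact_mod_cast norm_sub_sq (𝕜 := ℂ) u v
  have hret : RCLike.re (inner ℂ u v : ℂ) ≤ t := by
    rw [← ht]
    exact (RCLike.abs_re_le_norm _).trans' (le_abs_self _)
  have huv : ‖u - v‖ ≤ r := by
    have := h l
    rwa [ContinuousLinearMap.sub_apply] at this
  have huv2 : ‖u - v‖ ^ 2 ≤ r ^ 2 := by nlinarith [norm_nonneg (u - v)]
  have hvB : ‖v‖ ≤ ‖B‖ := by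
    have := B.le_opNorm (k l)
    rwa [hk l, mul_one] at this
  have hmv : ‖Binv‖⁻¹ ≤ ‖v‖ := hm l
  have hm0 : (0:ℝ) ≤ ‖Binv‖⁻¹ := inv_nonneg.mpr (norm_nonneg _)
  have key : ‖u‖ * s ≤ t + 1 / 2 * (‖B‖ ^ 2 - (‖Binv‖⁻¹) ^ 2) := by
    nlinarith [sq_nonneg (‖u‖ - s), norm_nonneg u, norm_nonneg v,
      mul_self_le_mul_self hm0 hmv, mul_self_le_mul_self (norm_nonneg v) hvB]
  have step : ‖u‖ ≤ (1 / s) * (t + 1 / 2 * (‖B‖ ^ 2 - (‖Binv‖⁻¹) ^ 2)) := by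
    rw [one_div, inv_mul_eq_div, le_div_iff₀ hs]
    exact key
  refine step.trans ?_
  exact mul_le_mul_of_nonneg_left (add_le_add_left htS _) (by positivity)
end

section
/- Let H be a complex Hilbert space, Ω nonempty, k : Ω → H unit vectors, A a bounded operator, μ ∈ ℂ, r > 0 with r < |μ|. If ‖(A − μ·I) k(λ)‖ ≤ r for all λ ∈ Ω, then sup_λ ‖A k(λ)‖ ≤ (sup_λ |⟨A k(λ), k(λ)⟩|) / √(1 − (r/|μ|)²). -/
open RCLike

lemma key_pt {H : Type*} [NormedAddCommGroup H] [InnerProductSpace ℂ H]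
    (A : H →L[ℂ] H) (μ : ℂ) (r : ℝ) (hr : 0 < r) (hrμ : r < ‖μ‖)
    (x : H) (hx : ‖x‖ = 1) (hle : ‖A x - μ • x‖ ≤ r) :
    ‖A x‖ * Real.sqrt (1 - (r / ‖μ‖) ^ 2) ≤ ‖(inner ℂ (A x) x : ℂ)‖ := by
  set c : ℂ := inner ℂ x (A x) with hc
  set y : H := A x - c • x with hy
  have hm : (0:ℝ) < ‖μ‖ := hr.trans hrμ
  have hinner : (inner ℂ x y : ℂ) = 0 := by
    simp [hy, inner_sub_right, inner_smul_right, ← hc,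
      inner_self_eq_norm_sq_to_K (𝕜 := ℂ) x, hx]
  have hcy : (inner ℂ ((c - μ) • x) y : ℂ) = 0 := by
    rw [inner_smul_left, hinner, mul_zero]
  have hcy2 : (inner ℂ (c • x) y : ℂ) = 0 := by
    rw [inner_smul_left, hinner, mul_zero]
  have hAx : A x = c • x + y := by rw [hy]; abel
  have P1 : ‖A x‖ ^ 2 = ‖c‖ ^ 2 + ‖y‖ ^ 2 := by
    rw [hAx, pow_two, norm_add_sq_eq_norm_sq_add_norm_sq_of_inner_eq_zero _ _ hcy2,
      norm_smul, hx]; ring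
  have hsub : A x - μ • x = (c - μ) • x + y := by
    rw [hy, sub_smul]; abel
  have P2 : ‖A x - μ • x‖ ^ 2 = ‖c - μ‖ ^ 2 + ‖y‖ ^ 2 := by
    rw [hsub, pow_two, norm_add_sq_eq_norm_sq_add_norm_sq_of_inner_eq_zero _ _ hcy,
      norm_smul, hx]; ring
  have hnc : ‖(inner ℂ (A x) x : ℂ)‖ = ‖c‖ := norm_inner_symm _ _
  rw [hnc]
  have ht0 : (0:ℝ) ≤ 1 - (r / ‖μ‖) ^ 2 := by
    have : (r / ‖μ‖) ^ 2 < 1 := by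
      have : r / ‖μ‖ < 1 := (div_lt_one hm).mpr hrμ
      nlinarith [div_nonneg hr.le hm.le]
    linarith
  have hlb : ‖μ‖ - ‖c‖ ≤ ‖c - μ‖ := by
    have := norm_sub_norm_le μ c
    rw [norm_sub_rev] at this; linarith [this]
  have hsq : (‖A x‖ * Real.sqrt (1 - (r / ‖μ‖) ^ 2)) ^ 2 ≤ ‖c‖ ^ 2 := by
    rw [mul_pow, Real.sq_sqrt ht0]
    have h1 : ‖A x - μ • x‖ ^ 2 ≤ r ^ 2 := by nlinarith [norm_nonneg (A x - μ • x)]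
    have hub : ‖c‖ ≤ ‖c - μ‖ + ‖μ‖ := by
      have := norm_add_le (c - μ) μ; simpa using this
    have h2 : ‖A x‖ ^ 2 ≤ r ^ 2 - ‖μ‖ ^ 2 + 2 * ‖μ‖ * ‖c‖ := by
      nlinarith [mul_nonneg (by linarith : (0:ℝ) ≤ ‖c - μ‖ - (‖μ‖ - ‖c‖))
        (by linarith : (0:ℝ) ≤ ‖c - μ‖ + ‖μ‖ - ‖c‖)]
    have hμ2 : (‖μ‖:ℝ) ^ 2 ≠ 0 := by positivity
    have hdiv : 1 - (r / ‖μ‖) ^ 2 = (‖μ‖ ^ 2 - r ^ 2) / ‖μ‖ ^ 2 := by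
      rw [div_pow, sub_div, div_self hμ2]
    have hmr : (0:ℝ) < ‖μ‖ ^ 2 - r ^ 2 := by nlinarith
    rw [hdiv, ← mul_div_assoc, div_le_iff₀ (by positivity)]
    nlinarith [sq_nonneg (‖c‖ * ‖μ‖ - (‖μ‖ ^ 2 - r ^ 2)),
      mul_le_mul_of_nonneg_right h2 hmr.le, norm_nonneg (A x), norm_nonneg c]
  calc ‖A x‖ * Real.sqrt (1 - (r / ‖μ‖) ^ 2)
      = Real.sqrt ((‖A x‖ * Real.sqrt (1 - (r / ‖μ‖) ^ 2)) ^ 2) := by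
        rw [Real.sqrt_sq (by positivity)]
    _ ≤ Real.sqrt (‖c‖ ^ 2) := Real.sqrt_le_sqrt hsq
    _ = ‖c‖ := Real.sqrt_sq (norm_nonneg _)

theorem stmt_5 {H : Type*} [NormedAddCommGroup H] [InnerProductSpace ℂ H] [CompleteSpace H]
    {Ω : Type*} [Nonempty Ω] (k : Ω → H) (hk : ∀ l, ‖k l‖ = 1)
    (A : H →L[ℂ] H) (μ : ℂ) (r : ℝ) (hr : 0 < r) (hrμ : r < ‖μ‖)
    (h : ∀ l, ‖(A - μ • ContinuousLinearMap.id ℂ H) (k l)‖ ≤ r) :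
    (⨆ l, ‖A (k l)‖) ≤
      (⨆ l, ‖(inner ℂ (A (k l)) (k l) : ℂ)‖) / Real.sqrt (1 - (r / ‖μ‖) ^ 2) := by
  have hm : (0:ℝ) < ‖μ‖ := hr.trans hrμ
  have ht0 : (0:ℝ) < 1 - (r / ‖μ‖) ^ 2 := by
    have h1 : r / ‖μ‖ < 1 := (div_lt_one hm).mpr hrμ
    nlinarith [div_nonneg hr.le hm.le]
  have hC : (0:ℝ) < Real.sqrt (1 - (r / ‖μ‖) ^ 2) := Real.sqrt_pos.mpr ht0
  have hbdd : BddAbove (Set.range fun l => ‖(inner ℂ (A (k l)) (k l) : ℂ)‖) := by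
    refine ⟨‖A‖, ?_⟩
    rintro _ ⟨l, rfl⟩
    calc ‖(inner ℂ (A (k l)) (k l) : ℂ)‖ ≤ ‖A (k l)‖ * ‖k l‖ := norm_inner_le_norm _ _
      _ ≤ ‖A‖ * 1 * 1 := by
          have := A.le_opNorm (k l)
          rw [hk l] at this ⊢; nlinarith [norm_nonneg A]
      _ = ‖A‖ := by ring
  apply ciSup_le
  intro l
  rw [le_div_iff₀ hC]
  have hle : ‖A (k l) - μ • k l‖ ≤ r := by
    have := h l
    simpa using this
  calc ‖A (k l)‖ * Real.sqrt (1 - (r / ‖μ‖) ^ 2)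
      ≤ ‖(inner ℂ (A (k l)) (k l) : ℂ)‖ := key_pt A μ r hr hrμ (k l) (hk l) hle
    _ ≤ ⨆ l, ‖(inner ℂ (A (k l)) (k l) : ℂ)‖ := le_ciSup hbdd l
end

section
/- Let H be a complex Hilbert space, Ω nonempty, k : Ω → H unit vectors, A, B bounded operators with B invertible, r > 0, with ‖(A−B) k(λ)‖ ≤ r for all λ ∈ Ω, and suppose 1/√(r²+1) ≤ ‖B⁻¹‖ < 1/r. Then (sup_λ ‖A k(λ)‖)² ≤ (sup_λ |⟨B* A k(λ), k(λ)⟩|)² + 2 (sup_λ |⟨B* A k(λ), k(λ)⟩|) · (‖B⁻¹‖ − √(1 − r²‖B⁻¹‖²)) / ‖B⁻¹‖. -/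
open ContinuousLinearMap in
theorem stmt_6 {H : Type*} [NormedAddCommGroup H] [InnerProductSpace ℂ H] [CompleteSpace H]
    {Ω : Type*} [Nonempty Ω] (k : Ω → H) (hk : ∀ l, ‖k l‖ = 1)
    (A B Binv : H →L[ℂ] H)
    (hB1 : B.comp Binv = ContinuousLinearMap.id ℂ H)
    (hB2 : Binv.comp B = ContinuousLinearMap.id ℂ H)
    (r : ℝ) (hr : 0 < r) (h : ∀ l, ‖(A - B) (k l)‖ ≤ r)
    (h1 : 1 / Real.sqrt (r ^ 2 + 1) ≤ ‖Binv‖) (h2 : ‖Binv‖ < 1 / r) :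
    (⨆ l, ‖A (k l)‖) ^ 2 ≤
      (⨆ l, ‖(inner ℂ ((adjoint B) (A (k l))) (k l) : ℂ)‖) ^ 2 +
        2 * (⨆ l, ‖(inner ℂ ((adjoint B) (A (k l))) (k l) : ℂ)‖) *
          ((‖Binv‖ - Real.sqrt (1 - r ^ 2 * ‖Binv‖ ^ 2)) / ‖Binv‖) := by
  obtain ⟨l₀⟩ := ‹Nonempty Ω›
  set N := ‖Binv‖ with hNdef
  -- k l₀ ≠ 0, so Binv ≠ 0
  have hk0 : k l₀ ≠ 0 := by
    intro hc
    have := hk l₀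
    rw [hc, norm_zero] at this
    norm_num at this
  have hinv : ∀ x : H, Binv (B x) = x := by
    intro x
    have := congrArg (fun T : H →L[ℂ] H => T x) hB2
    simpa using this
  have hN : 0 < N := by
    rcases (norm_nonneg Binv).lt_or_eq with hlt | heq
    · exact hlt
    · exfalso
      have hz : Binv = 0 := by
        rwa [eq_comm, norm_eq_zero] at heq
      have := hinv (k l₀)
      rw [hz] at this
      simp at this
      exact hk0 this.symm
  set b : Ω → ℝ := fun l => ‖(inner ℂ ((adjoint B) (A (k l))) (k l) : ℂ)‖ with hbdef
  have hbb : BddAbove (Set.range b) := by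
    refine ⟨‖adjoint B‖ * ‖A‖, ?_⟩
    rintro _ ⟨l, rfl⟩
    calc b l ≤ ‖(adjoint B) (A (k l))‖ * ‖k l‖ := norm_inner_le_norm _ _
      _ = ‖(adjoint B) (A (k l))‖ := by rw [hk l, mul_one]
      _ ≤ ‖adjoint B‖ * ‖A (k l)‖ := (adjoint B).le_opNorm _
      _ ≤ ‖adjoint B‖ * (‖A‖ * ‖k l‖) :=
          mul_le_mul_of_nonneg_left (A.le_opNorm _) (norm_nonneg _)
      _ = ‖adjoint B‖ * ‖A‖ := by rw [hk l, mul_one]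
  -- pointwise key inequality
  have key : ∀ l, ‖A (k l)‖ ^ 2 ≤ 2 * b l - (1 / N) ^ 2 + r ^ 2 := by
    intro l
    have e1 : ‖(A - B) (k l)‖ ^ 2
        = ‖A (k l)‖ ^ 2 - 2 * RCLike.re (inner ℂ (A (k l)) (B (k l)) : ℂ) + ‖B (k l)‖ ^ 2 := by
      rw [ContinuousLinearMap.sub_apply]
      exact norm_sub_sq _ _
    have e2 : (inner ℂ ((adjoint B) (A (k l))) (k l) : ℂ) = inner ℂ (A (k l)) (B (k l)) :=
      adjoint_inner_left _ _ _
    have e3 : RCLike.re (inner ℂ (A (k l)) (B (k l)) : ℂ) ≤ b l := by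
      rw [hbdef]
      simp only [e2]
      exact RCLike.re_le_norm _
    have e4 : 1 / N ≤ ‖B (k l)‖ := by
      have h5 : ‖k l‖ ≤ N * ‖B (k l)‖ := by
        conv_lhs => rw [← hinv (k l)]
        exact Binv.le_opNorm _
      rw [hk l] at h5
      rw [div_le_iff₀ hN] at *
      linarith [h5]
    have e4' : (1 / N) ^ 2 ≤ ‖B (k l)‖ ^ 2 := by
      have := pow_le_pow_left₀ (by positivity) e4 2
      exact this
    have e5 : ‖(A - B) (k l)‖ ^ 2 ≤ r ^ 2 := by
      have := h l
      nlinarith [norm_nonneg ((A - B) (k l))]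
    linarith [e1, e3, e4', e5]
  set S := ⨆ l, b l with hSdef
  have hbS : ∀ l, b l ≤ S := fun l => le_ciSup hbb l
  have hS0 : 0 ≤ S := le_trans (norm_nonneg _) (hbS l₀)
  set c := Real.sqrt (1 - r ^ 2 * N ^ 2) with hcdef
  have hrN : r ^ 2 * N ^ 2 < 1 := by
    have : N * r < 1 := by
      rw [lt_div_iff₀ hr] at h2
      linarith
    nlinarith [mul_pos hN hr, this]
  have hsq : c ^ 2 = 1 - r ^ 2 * N ^ 2 := Real.sq_sqrt (by linarith)
  have hc0 : 0 ≤ c := Real.sqrt_nonneg _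
  have hc1 : c ≤ N := by
    have hs : (0:ℝ) < Real.sqrt (r ^ 2 + 1) := Real.sqrt_pos.mpr (by positivity)
    have hNsq : 1 / (r ^ 2 + 1) ≤ N ^ 2 := by
      have h6 : (1 / Real.sqrt (r ^ 2 + 1)) ^ 2 ≤ N ^ 2 :=
        pow_le_pow_left₀ (by positivity) h1 2
      rwa [div_pow, one_pow, Real.sq_sqrt (by positivity)] at h6
    have h7 : 1 - r ^ 2 * N ^ 2 ≤ N ^ 2 := by
      rw [div_le_iff₀ (by positivity)] at hNsq
      nlinarith
    calc c ≤ Real.sqrt (N ^ 2) := Real.sqrt_le_sqrt h7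
      _ = N := by rw [Real.sqrt_sq hN.le]
  have hcc : (c / N) ^ 2 = (1 / N) ^ 2 - r ^ 2 := by
    rw [div_pow, hsq, div_pow, one_pow]
    field_simp
  have key2 : ∀ l, ‖A (k l)‖ ^ 2 ≤ S ^ 2 + 2 * S * ((N - c) / N) := by
    intro l
    have h8 : (N - c) / N = 1 - c / N := by field_simp
    rw [h8]
    have h9 := key l
    have h10 := hbS l
    nlinarith [sq_nonneg (S - c / N)]
  have hRHS0 : 0 ≤ S ^ 2 + 2 * S * ((N - c) / N) := by
    have : 0 ≤ (N - c) / N := div_nonneg (by linarith) hN.le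
    positivity
  have hsup : (⨆ l, ‖A (k l)‖) ≤ Real.sqrt (S ^ 2 + 2 * S * ((N - c) / N)) := by
    refine ciSup_le fun l => ?_
    rw [show Real.sqrt (S ^ 2 + 2 * S * ((N - c) / N))
        = Real.sqrt (S ^ 2 + 2 * S * ((N - c) / N)) from rfl]
    have := key2 l
    nlinarith [Real.sq_sqrt hRHS0, Real.sqrt_nonneg (S ^ 2 + 2 * S * ((N - c) / N)),
      norm_nonneg (A (k l))]
  have hsup0 : 0 ≤ ⨆ l, ‖A (k l)‖ := Real.iSup_nonneg fun l => norm_nonneg _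
  calc (⨆ l, ‖A (k l)‖) ^ 2 ≤ Real.sqrt (S ^ 2 + 2 * S * ((N - c) / N)) ^ 2 :=
        pow_le_pow_left₀ hsup0 hsup 2
    _ = S ^ 2 + 2 * S * ((N - c) / N) := Real.sq_sqrt hRHS0
end

section
/- Let H be a complex Hilbert space, Ω nonempty, k : Ω → H unit vectors, A, B bounded operators with B invertible, r > 0, ‖(A−B) k(λ)‖ ≤ r for all λ ∈ Ω, and ‖B⁻¹‖ < 1/r. Then 0 ≤ (sup_λ ‖A k(λ)‖)² ‖B‖² − (sup_λ |⟨B* A k(λ), k(λ)⟩|)² ≤ 2 (sup_λ |⟨B* A k(λ), k(λ)⟩|) · (‖B‖/‖B⁻¹‖) · (‖B‖·‖B⁻¹‖ − √(1 − r²‖B⁻¹‖²)). -/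
open ContinuousLinearMap in
set_option maxHeartbeats 1000000 in
theorem stmt_7 {H : Type*} [NormedAddCommGroup H] [InnerProductSpace ℂ H] [CompleteSpace H]
    {Ω : Type*} [Nonempty Ω] (k : Ω → H) (hk : ∀ l, ‖k l‖ = 1)
    (A B Binv : H →L[ℂ] H)
    (hB1 : B.comp Binv = ContinuousLinearMap.id ℂ H)
    (hB2 : Binv.comp B = ContinuousLinearMap.id ℂ H)
    (r : ℝ) (hr : 0 < r) (h : ∀ l, ‖(A - B) (k l)‖ ≤ r)
    (h2 : ‖Binv‖ < 1 / r) :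
    0 ≤ (⨆ l, ‖A (k l)‖) ^ 2 * ‖B‖ ^ 2 -
        (⨆ l, ‖(inner ℂ ((adjoint B) (A (k l))) (k l) : ℂ)‖) ^ 2 ∧
      (⨆ l, ‖A (k l)‖) ^ 2 * ‖B‖ ^ 2 -
          (⨆ l, ‖(inner ℂ ((adjoint B) (A (k l))) (k l) : ℂ)‖) ^ 2 ≤
        2 * (⨆ l, ‖(inner ℂ ((adjoint B) (A (k l))) (k l) : ℂ)‖) * (‖B‖ / ‖Binv‖) *
          (‖B‖ * ‖Binv‖ - Real.sqrt (1 - r ^ 2 * ‖Binv‖ ^ 2)) := by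
  obtain ⟨l0⟩ := ‹Nonempty Ω›
  set N := ⨆ l, ‖A (k l)‖ with hNdef
  set p := ⨆ l, ‖(inner ℂ ((adjoint B) (A (k l))) (k l) : ℂ)‖ with hpdef
  set b := ‖Binv‖ with hbdef
  set t := Real.sqrt (1 - r ^ 2 * b ^ 2) with htdef
  -- rewrite the inner product
  have hinner : ∀ l, (inner ℂ ((adjoint B) (A (k l))) (k l) : ℂ)
      = inner ℂ (A (k l)) (B (k l)) := fun l =>
    ContinuousLinearMap.adjoint_inner_left B (k l) (A (k l))
  have hone : ∀ l, (1:ℝ) ≤ b * ‖B (k l)‖ := by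
    intro l
    have hx : Binv (B (k l)) = k l := by
      have := congrArg (fun T => T (k l)) hB2; simpa using this
    calc (1:ℝ) = ‖k l‖ := (hk l).symm
      _ = ‖Binv (B (k l))‖ := by rw [hx]
      _ ≤ b * ‖B (k l)‖ := Binv.le_opNorm _
  have hb_pos : 0 < b := by
    rcases lt_or_ge 0 b with h' | h'
    · exact h'
    · exfalso
      have := hone l0
      nlinarith [norm_nonneg (B (k l0))]
  have hB_pos : 0 < ‖B‖ := by
    have h1 := hone l0
    have h2' : ‖B (k l0)‖ ≤ ‖B‖ := by
      have := B.le_opNorm (k l0); rw [hk l0] at this; simpa using this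
    nlinarith
  -- boundedness of the two sups
  have bddN : BddAbove (Set.range fun l => ‖A (k l)‖) := by
    refine ⟨‖A‖, ?_⟩
    rintro x ⟨l, rfl⟩
    have := A.le_opNorm (k l); rw [hk l] at this; simpa using this
  have bddP : BddAbove (Set.range fun l =>
      ‖(inner ℂ ((adjoint B) (A (k l))) (k l) : ℂ)‖) := by
    refine ⟨‖adjoint B‖ * ‖A‖, ?_⟩
    rintro x ⟨l, rfl⟩
    have h3 : ‖A (k l)‖ ≤ ‖A‖ := by
      have := A.le_opNorm (k l); rw [hk l] at this; simpa using this
    calc ‖(inner ℂ ((adjoint B) (A (k l))) (k l) : ℂ)‖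
        ≤ ‖(adjoint B) (A (k l))‖ * ‖k l‖ := norm_inner_le_norm _ _
      _ = ‖(adjoint B) (A (k l))‖ := by rw [hk l, mul_one]
      _ ≤ ‖adjoint B‖ * ‖A (k l)‖ := (adjoint B).le_opNorm _
      _ ≤ ‖adjoint B‖ * ‖A‖ := by
          exact mul_le_mul_of_nonneg_left h3 (norm_nonneg _)
  have hNl : ∀ l, ‖A (k l)‖ ≤ N := fun l => le_ciSup bddN l
  have hpl : ∀ l, ‖(inner ℂ ((adjoint B) (A (k l))) (k l) : ℂ)‖ ≤ p := fun l =>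
    le_ciSup bddP l
  have hN_nonneg : 0 ≤ N := le_trans (norm_nonneg _) (hNl l0)
  have hp_nonneg : 0 ≤ p := le_trans (norm_nonneg _) (hpl l0)
  -- first part : p ≤ N * ‖B‖
  have hpNB : p ≤ N * ‖B‖ := by
    apply ciSup_le
    intro l
    have h1 : ‖(inner ℂ (A (k l)) (B (k l)) : ℂ)‖ ≤ ‖A (k l)‖ * ‖B (k l)‖ :=
      norm_inner_le_norm _ _
    have h2' : ‖B (k l)‖ ≤ ‖B‖ := by
      have := B.le_opNorm (k l); rw [hk l] at this; simpa using this
    rw [hinner l]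
    calc ‖(inner ℂ (A (k l)) (B (k l)) : ℂ)‖ ≤ ‖A (k l)‖ * ‖B (k l)‖ := h1
      _ ≤ N * ‖B‖ := by
          exact mul_le_mul (hNl l) h2' (norm_nonneg _) hN_nonneg
  have part1 : 0 ≤ N ^ 2 * ‖B‖ ^ 2 - p ^ 2 := by nlinarith
  refine ⟨part1, ?_⟩
  -- pointwise key inequality
  have key : ∀ l, ‖A (k l)‖ ^ 2 ≤ 2 * p + r ^ 2 - 1 / b ^ 2 := by
    intro l
    have e1 : ‖(A - B) (k l)‖ ^ 2 ≤ r ^ 2 := by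
      have := h l; nlinarith [norm_nonneg ((A - B) (k l))]
    have e2 : (A - B) (k l) = A (k l) - B (k l) := by simp
    rw [e2] at e1
    have e3 : ‖A (k l) - B (k l)‖ ^ 2
        = ‖A (k l)‖ ^ 2 - 2 * RCLike.re (inner ℂ (A (k l)) (B (k l)) : ℂ)
          + ‖B (k l)‖ ^ 2 := by
      rw [@norm_sub_sq ℂ]
    have e4 : RCLike.re (inner ℂ (A (k l)) (B (k l)) : ℂ)
        ≤ ‖(inner ℂ (A (k l)) (B (k l)) : ℂ)‖ := RCLike.re_le_norm _
    have e5 : ‖(inner ℂ (A (k l)) (B (k l)) : ℂ)‖ ≤ p := by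
      rw [← hinner l]; exact hpl l
    have e6 : 1 / b ^ 2 ≤ ‖B (k l)‖ ^ 2 := by
      have h1 := hone l
      rw [div_le_iff₀ (by positivity)]
      nlinarith [norm_nonneg (B (k l))]
    rw [e3] at e1
    linarith
  -- N^2 bound
  have hRnn : 0 ≤ 2 * p + r ^ 2 - 1 / b ^ 2 :=
    le_trans (sq_nonneg _) (key l0)
  have hNle : N ≤ Real.sqrt (2 * p + r ^ 2 - 1 / b ^ 2) := by
    apply ciSup_le
    intro l
    exact (Real.le_sqrt (norm_nonneg _) hRnn).mpr (key l)
  have hN2 : N ^ 2 ≤ 2 * p + r ^ 2 - 1 / b ^ 2 := by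
    have := pow_le_pow_left₀ hN_nonneg hNle 2
    rwa [Real.sq_sqrt hRnn] at this
  -- positivity of 1 - r^2 b^2
  have hs : 0 < 1 - r ^ 2 * b ^ 2 := by
    have hrb : r * b < 1 := by
      have h3 := (lt_div_iff₀ hr).mp h2
      linarith [mul_comm b r]
    have h4 : (r * b) ^ 2 < 1 := by
      have h0 : 0 ≤ r * b := by positivity
      nlinarith
    have h5 : (r * b) ^ 2 = r ^ 2 * b ^ 2 := by ring
    linarith
  have ht2 : t ^ 2 = 1 - r ^ 2 * b ^ 2 := Real.sq_sqrt hs.le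
  have ht_nonneg : 0 ≤ t := Real.sqrt_nonneg _
  -- division-free core inequality
  have hN2b : N ^ 2 * b ^ 2 ≤ (2 * p + r ^ 2) * b ^ 2 - 1 := by
    have h' := mul_le_mul_of_nonneg_right hN2 (sq_nonneg b)
    have hRb : (2 * p + r ^ 2 - 1 / b ^ 2) * b ^ 2 = (2 * p + r ^ 2) * b ^ 2 - 1 := by
      field_simp
    linarith [h'.trans_eq hRb]
  have core : (N ^ 2 * ‖B‖ ^ 2 - p ^ 2) * b ^ 2
      ≤ 2 * p * ‖B‖ * (‖B‖ * b - t) * b := by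
    have H1 := mul_le_mul_of_nonneg_right hN2b (sq_nonneg ‖B‖)
    have H2 : 0 ≤ (p * b - t * ‖B‖) ^ 2 := sq_nonneg _
    have H3 : t ^ 2 * ‖B‖ ^ 2 = (1 - r ^ 2 * b ^ 2) * ‖B‖ ^ 2 := by rw [ht2]
    nlinarith
  -- conclude
  have hrw : 2 * p * (‖B‖ / b) * (‖B‖ * b - t)
      = 2 * p * ‖B‖ * (‖B‖ * b - t) * b / b ^ 2 := by
    field_simp
  rw [hrw, le_div_iff₀ (by positivity : (0:ℝ) < b ^ 2)]
  exact core
end
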